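/- Let φ, ψ be flows on X, Y and suppose φ is (h,τ)-related to ψ. Then for all x⁻, x⁺ ∈ X, h maps the (x⁻,x⁺)-core of φ onto the (h(x⁻),h(x⁺))-core of ψ: h(C_{x⁻,x⁺}(φ,X)) = C_{h(x⁻),h(x⁺)}(ψ,Y). -/

import Mathlib

open Filter Topology


set_option linter.unusedSectionVars false
set_option maxHeartbeats 1000000

section helpers

variable {Z W : Type*} [TopologicalSpace Z] [T2Space Z] [TopologicalSpace W] [T2Space W]

/-- cancel -/
theorem flow_cancel (F : ℝ → Z → Z) (h0 : ∀ z, F 0 z = z)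
    (hg : ∀ t s z, F t (F s z) = F (t + s) z) (a : ℝ) (z : Z) :
    F (-a) (F a z) = z := by rw [hg]; simp [h0]

theorem flow_shift_iff (F : ℝ → Z → Z) (h0 : ∀ z, F 0 z = z)
    (hg : ∀ t s z, F t (F s z) = F (t + s) z) (a b : ℝ) (z : Z) :
    F a z = F b z ↔ F (a - b) z = z := by
  constructor
  · intro hab
    have := congrArg (F (-b)) hab
    rwa [hg, hg, neg_add_cancel, h0, show -b + a = a - b by ring] at this
  · intro hd
    have := congrArg (F b) hd
    rwa [hg, show b + (a - b) = a by ring] at this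

theorem flow_iterate (F : ℝ → Z → Z) (h0 : ∀ z, F 0 z = z)
    (hg : ∀ t s z, F t (F s z) = F (t + s) z) {T : ℝ} {z : Z} (hz : F T z = z) :
    ∀ k : ℕ, F (k * T) z = z := by
  intro k
  induction k with
  | zero => simp [h0]
  | succ n ih =>
      rw [show ((n + 1 : ℕ) : ℝ) * T = T + (n : ℕ) * T by push_cast; ring, ← hg, ih, hz]

/-- limits of orbits are rest points -/
theorem rest_of_tendsto (F : ℝ → Z → Z)
    (hc : Continuous fun p : ℝ × Z => F p.1 p.2)
    (hg : ∀ t s z, F t (F s z) = F (t + s) z)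
    {b z : Z} (hb : Tendsto (fun t : ℝ => F t b) atTop (𝓝 z)) :
    ∀ s, F s z = z := by
  intro s
  have hcs : Continuous fun w => F s w := by
    have : (fun w => F s w) = (fun p : ℝ × Z => F p.1 p.2) ∘ (fun w => (s, w)) := rfl
    rw [this]; exact hc.comp (by continuity)
  have h1 : Tendsto (fun t : ℝ => F s (F t b)) atTop (𝓝 (F s z)) :=
    (hcs.tendsto z).comp hb
  have h2 : Tendsto (fun t : ℝ => F (s + t) b) atTop (𝓝 z) :=
    hb.comp (tendsto_atTop_add_const_left atTop s tendsto_id)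
  have he : (fun t : ℝ => F s (F t b)) = fun t : ℝ => F (s + t) b := by
    funext t; rw [hg]
  rw [he] at h1
  exact tendsto_nhds_unique h1 h2

/-- trichotomy for the period group of a point under a flow -/
theorem period_trichotomy (F : ℝ → W → W)
    (hc : Continuous fun p : ℝ × W => F p.1 p.2)
    (h0 : ∀ z, F 0 z = z)
    (hg : ∀ t s z, F t (F s z) = F (t + s) z) (y : W) :
    (∀ q, F q y = y) ∨
    (∃ p : ℝ, 0 < p ∧ ∀ q, (F q y = y ↔ ∃ k : ℤ, q = k * p)) ∨
    (∀ q, F q y = y → q = 0) := by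
  classical
  set S : AddSubgroup ℝ :=
    { carrier := {q | F q y = y}
      zero_mem' := h0 y
      add_mem' := by
        intro a b ha hb
        simp only [Set.mem_setOf_eq] at *
        rw [← hg, hb, ha]
      neg_mem' := by
        intro a ha
        simp only [Set.mem_setOf_eq] at *
        nth_rewrite 1 [← ha]
        exact flow_cancel F h0 hg a y } with hS
  have hclosed : IsClosed (S : Set ℝ) := by
    have : (S : Set ℝ) = (fun q => F q y) ⁻¹' {y} := rfl
    rw [this]
    have hcy : Continuous fun q : ℝ => F q y := by
      have : (fun q : ℝ => F q y) = (fun p : ℝ × W => F p.1 p.2) ∘ (fun q => (q, y)) := rfl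
      rw [this]; exact hc.comp (by continuity)
    exact IsClosed.preimage hcy isClosed_singleton
  rcases AddSubgroup.dense_or_cyclic S with hdense | ⟨a, ha⟩
  · left
    intro q
    have : (S : Set ℝ) = Set.univ := by rw [← hclosed.closure_eq]; exact hdense.closure_eq
    have hq : q ∈ (S : Set ℝ) := this ▸ Set.mem_univ q
    exact hq
  · by_cases h0a : a = 0
    · right; right
      intro q hq
      have hq' : q ∈ S := hq
      rw [ha, h0a] at hq'
      rcases AddSubgroup.mem_closure_singleton.mp hq' with ⟨n, hn⟩
      simpa using hn.symm
    · right; left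
      refine ⟨|a|, abs_pos.mpr h0a, fun q => ?_⟩
      constructor
      · intro hq
        have hq' : q ∈ S := hq
        rw [ha] at hq'
        rcases AddSubgroup.mem_closure_singleton.mp hq' with ⟨n, hn⟩
        rcases abs_cases a with ⟨h1, _⟩ | ⟨h1, _⟩
        · exact ⟨n, by rw [h1, ← hn, zsmul_eq_mul]⟩
        · exact ⟨-n, by rw [h1, ← hn, zsmul_eq_mul]; push_cast; ring⟩
      · rintro ⟨k, rfl⟩
        have hmem : (k : ℝ) * |a| ∈ S := by
          rw [ha]
          rcases abs_cases a with ⟨h1, _⟩ | ⟨h1, _⟩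
          · exact AddSubgroup.mem_closure_singleton.mpr ⟨k, by rw [h1, zsmul_eq_mul]⟩
          · exact AddSubgroup.mem_closure_singleton.mpr ⟨-k, by rw [h1, zsmul_eq_mul]; push_cast; ring⟩
        exact hmem

end helpers


section rel
variable {X Y : Type*} [TopologicalSpace X] [T2Space X] [TopologicalSpace Y] [T2Space Y]
variable {φ : ℝ → X → X} {ψ : ℝ → Y → Y} {h : X ≃ₜ Y} {τ : ℝ → X → ℝ}
variable (hφc : Continuous fun p : ℝ × X => φ p.1 p.2)
  (hφ0 : ∀ x, φ 0 x = x) (hφg : ∀ t s x, φ t (φ s x) = φ (t + s) x)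
  (hψc : Continuous fun p : ℝ × Y => ψ p.1 p.2)
  (hψ0 : ∀ y, ψ 0 y = y) (hψg : ∀ t s y, ψ t (ψ s y) = ψ (t + s) y)
  (hτ : ∀ x, StrictMono fun t => τ t x)
  (hrel : ∀ t x, h (φ t x) = ψ (τ t x) (h x))

include hψc in
theorem cont_psi1 (y : Y) : Continuous fun q : ℝ => ψ q y :=
  hψc.comp (Continuous.prodMk continuous_id continuous_const)

include hφc in
theorem cont_phi1 (u : X) : Continuous fun t : ℝ => φ t u :=
  hφc.comp (Continuous.prodMk continuous_id continuous_const)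

include hφc in
theorem cont_phi2 (s : ℝ) : Continuous fun u : X => φ s u :=
  hφc.comp (Continuous.prodMk continuous_const continuous_id)

include hφc in
theorem contF (u : X) : Continuous fun t : ℝ => h (φ t u) :=
  h.continuous.comp (cont_phi1 hφc u)

include hτ hrel in
/-- a rest point cannot have countable period group of its image -/
theorem rest_countable_contra {z : X} (hz : ∀ s, φ s z = z)
    (hcnt : {q : ℝ | ψ q (h z) = h z}.Countable) : False := by
  have hmap : ∀ s : ℝ, τ s z ∈ {q : ℝ | ψ q (h z) = h z} := by
    intro s
    have := hrel s z
    rw [hz s] at this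
    exact this.symm
  have hinj : Function.Injective fun s => τ s z := (hτ z).injective
  have : (Set.univ : Set ℝ).Countable := by
    have hpre : ((fun s => τ s z) ⁻¹' {q : ℝ | ψ q (h z) = h z}).Countable :=
      hcnt.preimage hinj
    exact hpre.mono (fun s _ => hmap s)
  exact Cardinal.not_countable_real this

include hψ0 hψg in
theorem G_conj (a : ℝ) (w : Y) :
    {q : ℝ | ψ q (ψ a w) = ψ a w} = {q : ℝ | ψ q w = w} := by
  ext q
  simp only [Set.mem_setOf_eq]
  constructor
  · intro hq
    have h1 := congrArg (ψ (-a)) hq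
    rw [hψg q a w] at h1
    rw [hψg (-a) (q + a) w, hψg (-a) a w] at h1
    rw [show -a + (q + a) = q by ring, show -a + a = (0:ℝ) by ring, hψ0] at h1
    exact h1
  · intro hq
    rw [hψg, show q + a = a + q by ring, ← hψg, hq]

include hφc hφg hψc hψ0 hψg hτ hrel in
/-- if the period group of `h u` is countable, `τ · u` is unbounded above -/
theorem tau_unbounded {u : X} (hcnt : {q : ℝ | ψ q (h u) = h u}.Countable) :
    ∀ C : ℝ, ∃ t : ℝ, C ≤ τ t u := by
  intro C
  by_contra hcon
  push_neg at hcon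
  have hmono : Monotone fun t => τ t u := (hτ u).monotone
  have hbdd : BddAbove (Set.range fun t => τ t u) := ⟨C, by rintro q ⟨t, rfl⟩; exact (hcon t).le⟩
  set A := ⨆ t : ℝ, τ t u with hA
  have hlim : Tendsto (fun t => τ t u) atTop (𝓝 A) := tendsto_atTop_ciSup hmono hbdd
  set z := h.symm (ψ A (h u)) with hzdef
  have horb : ∀ t, φ t u = h.symm (ψ (τ t u) (h u)) := by
    intro t; rw [← hrel]; exact (h.symm_apply_apply _).symm
  have hlim2 : Tendsto (fun t => φ t u) atTop (𝓝 z) := by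
    have hc : Continuous fun q : ℝ => h.symm (ψ q (h u)) :=
      h.symm.continuous.comp (cont_psi1 hψc (h u))
    exact ((hc.tendsto A).comp hlim).congr (fun t => (horb t).symm)
  have hrest : ∀ s, φ s z = z := rest_of_tendsto φ hφc hφg hlim2
  have hcnt' : {q : ℝ | ψ q (h z) = h z}.Countable := by
    have hhz : h z = ψ A (h u) := h.apply_symm_apply _
    rw [hhz, G_conj hψ0 hψg]
    exact hcnt
  exact rest_countable_contra hτ hrel hrest hcnt'

include hφ0 hrel in
theorem tau_zero_mem {u : X} : ψ (τ 0 u) (h u) = h u := by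
  have := hrel 0 u
  rw [hφ0] at this
  exact this.symm

include hφc hψc hτ hrel in
/-- left limit of `τ · u` at `t₁` -/
theorem tau_leftlim (u : X) (t₁ : ℝ) :
    ∃ a : ℝ, a ≤ τ t₁ u ∧ (∀ t < t₁, τ t u ≤ a) ∧
      (∀ ε > 0, ∃ t' < t₁, a - ε < τ t' u) ∧ ψ a (h u) = ψ (τ t₁ u) (h u) := by
  have hmono : Monotone fun t => τ t u := (hτ u).monotone
  set g : ℕ → ℝ := fun k : ℕ => τ (t₁ - 1 / ((k:ℝ) + 1)) u with hg
  have hgmono : Monotone g := by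
    intro i j hij
    apply hmono
    have : (1:ℝ) / ((j:ℝ)+1) ≤ 1 / ((i:ℝ)+1) := by
      apply one_div_le_one_div_of_le
      · positivity
      · have : (i:ℝ) ≤ (j:ℝ) := Nat.cast_le.mpr hij
        linarith
    linarith
  have hgbdd : BddAbove (Set.range g) := by
    refine ⟨τ t₁ u, ?_⟩
    rintro q ⟨k, rfl⟩
    apply hmono
    have : (0:ℝ) < 1 / ((k:ℝ)+1) := by positivity
    linarith
  set a := ⨆ k, g k with ha
  have hlim : Tendsto g atTop (𝓝 a) := tendsto_atTop_ciSup hgmono hgbdd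
  have htk : Tendsto (fun k : ℕ => t₁ - 1 / ((k:ℝ) + 1)) atTop (𝓝 t₁) := by
    have : Tendsto (fun k : ℕ => 1 / ((k:ℝ) + 1)) atTop (𝓝 0) :=
      tendsto_one_div_add_atTop_nhds_zero_nat
    simpa using (tendsto_const_nhds (x := t₁)).sub this
  refine ⟨a, ?_, ?_, ?_, ?_⟩
  · apply ciSup_le
    intro k
    apply hmono
    have : (0:ℝ) < 1 / ((k:ℝ)+1) := by positivity
    linarith
  · intro t ht
    obtain ⟨k, hk⟩ := exists_nat_gt (1 / (t₁ - t))
    have hk1 : 1 / ((k:ℝ) + 1) < t₁ - t := by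
      rw [div_lt_iff₀ (by positivity)]
      rw [div_lt_iff₀ (by linarith)] at hk
      nlinarith [sub_pos.mpr ht]
    have : τ t u ≤ g k := by
      apply hmono; linarith
    exact this.trans (le_ciSup hgbdd k)
  · intro ε hε
    rcases exists_lt_of_lt_ciSup (show a - ε < a by linarith) with ⟨k, hk⟩
    exact ⟨t₁ - 1 / ((k:ℝ) + 1), by
      have : (0:ℝ) < 1 / ((k:ℝ)+1) := by positivity
      linarith, hk⟩
  · have h1 : Tendsto (fun k => ψ (g k) (h u)) atTop (𝓝 (ψ a (h u))) :=
      ((cont_psi1 hψc (h u)).tendsto a).comp hlim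
    have h2 : Tendsto (fun k : ℕ => h (φ (t₁ - 1 / ((k:ℝ) + 1)) u)) atTop (𝓝 (h (φ t₁ u))) :=
      ((contF hφc (h := h) u).tendsto t₁).comp htk
    have heq : (fun k : ℕ => ψ (g k) (h u)) = fun k : ℕ => h (φ (t₁ - 1 / ((k:ℝ) + 1)) u) := by
      funext k; rw [hrel]
    rw [heq] at h1
    have := tendsto_nhds_unique h1 h2
    rw [this, hrel]

include hφc hψc hτ hrel in
/-- right limit of `τ · u` at `t₁` -/
theorem tau_rightlim (u : X) (t₁ : ℝ) :
    ∃ b : ℝ, τ t₁ u ≤ b ∧ (∀ t, t₁ < t → b ≤ τ t u) ∧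
      (∀ ε > 0, ∃ t', t₁ < t' ∧ τ t' u < b + ε) ∧ ψ b (h u) = ψ (τ t₁ u) (h u) := by
  have hmono : Monotone fun t => τ t u := (hτ u).monotone
  set g : ℕ → ℝ := fun k : ℕ => τ (t₁ + 1 / ((k:ℝ) + 1)) u with hg
  have hganti : Antitone g := by
    intro i j hij
    apply hmono
    have : (1:ℝ) / ((j:ℝ)+1) ≤ 1 / ((i:ℝ)+1) := by
      apply one_div_le_one_div_of_le
      · positivity
      · have : (i:ℝ) ≤ (j:ℝ) := Nat.cast_le.mpr hij
        linarith
    linarith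
  have hgbdd : BddBelow (Set.range g) := by
    refine ⟨τ t₁ u, ?_⟩
    rintro q ⟨k, rfl⟩
    apply hmono
    have : (0:ℝ) < 1 / ((k:ℝ)+1) := by positivity
    linarith
  set b := ⨅ k, g k with hb
  have hlim : Tendsto g atTop (𝓝 b) := tendsto_atTop_ciInf hganti hgbdd
  have htk : Tendsto (fun k : ℕ => t₁ + 1 / ((k:ℝ) + 1)) atTop (𝓝 t₁) := by
    have : Tendsto (fun k : ℕ => 1 / ((k:ℝ) + 1)) atTop (𝓝 0) :=
      tendsto_one_div_add_atTop_nhds_zero_nat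
    simpa using (tendsto_const_nhds (x := t₁)).add this
  refine ⟨b, ?_, ?_, ?_, ?_⟩
  · apply le_ciInf
    intro k
    apply hmono
    have : (0:ℝ) < 1 / ((k:ℝ)+1) := by positivity
    linarith
  · intro t ht
    obtain ⟨k, hk⟩ := exists_nat_gt (1 / (t - t₁))
    have hk1 : 1 / ((k:ℝ) + 1) < t - t₁ := by
      rw [div_lt_iff₀ (by positivity)]
      rw [div_lt_iff₀ (by linarith)] at hk
      nlinarith [sub_pos.mpr ht]
    have : g k ≤ τ t u := by
      apply hmono; linarith
    exact (ciInf_le hgbdd k).trans this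
  · intro ε hε
    rcases exists_lt_of_ciInf_lt (show b < b + ε by linarith) with ⟨k, hk⟩
    exact ⟨t₁ + 1 / ((k:ℝ) + 1), by
      have : (0:ℝ) < 1 / ((k:ℝ)+1) := by positivity
      linarith, hk⟩
  · have h1 : Tendsto (fun k => ψ (g k) (h u)) atTop (𝓝 (ψ b (h u))) :=
      ((cont_psi1 hψc (h u)).tendsto b).comp hlim
    have h2 : Tendsto (fun k : ℕ => h (φ (t₁ + 1 / ((k:ℝ) + 1)) u)) atTop (𝓝 (h (φ t₁ u))) :=
      ((contF hφc (h := h) u).tendsto t₁).comp htk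
    have heq : (fun k : ℕ => ψ (g k) (h u)) = fun k : ℕ => h (φ (t₁ + 1 / ((k:ℝ) + 1)) u) := by
      funext k; rw [hrel]
    rw [heq] at h1
    have := tendsto_nhds_unique h1 h2
    rw [this, hrel]

end rel
section machine
variable {X Y : Type*} [TopologicalSpace X] [T2Space X] [TopologicalSpace Y] [T2Space Y]
variable {φ : ℝ → X → X} {ψ : ℝ → Y → Y} {h : X ≃ₜ Y} {τ : ℝ → X → ℝ}
variable (hφc : Continuous fun p : ℝ × X => φ p.1 p.2)
  (hφ0 : ∀ x, φ 0 x = x) (hφg : ∀ t s x, φ t (φ s x) = φ (t + s) x)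
  (hψc : Continuous fun p : ℝ × Y => ψ p.1 p.2)
  (hψ0 : ∀ y, ψ 0 y = y) (hψg : ∀ t s y, ψ t (ψ s y) = ψ (t + s) y)
  (hτ : ∀ x, StrictMono fun t => τ t x)
  (hrel : ∀ t x, h (φ t x) = ψ (τ t x) (h x))

include hφc hφg hψc hψ0 hψg hτ hrel in
/-- In the discrete-nontrivial-period case, `τ · u` hits every coset with arbitrarily
high values. -/
theorem tau_hits {u : X} {p : ℝ} (hp : 0 < p)
    (hG : ∀ q, ψ q (h u) = h u ↔ ∃ k : ℤ, q = k * p)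
    (sstar C : ℝ) :
    ∃ t : ℝ, C ≤ τ t u ∧ ψ (τ t u) (h u) = ψ sstar (h u) := by
  classical
  have hdiff : ∀ a b : ℝ, ψ a (h u) = ψ b (h u) ↔ ∃ k : ℤ, a - b = k * p := by
    intro a b
    rw [flow_shift_iff ψ hψ0 hψg, hG]
  have hcnt : {q : ℝ | ψ q (h u) = h u}.Countable := by
    have hset : {q : ℝ | ψ q (h u) = h u} = Set.range (fun k : ℤ => (k : ℝ) * p) := by
      ext q
      simp only [Set.mem_setOf_eq, Set.mem_range, hG q]
      exact ⟨fun ⟨k, hk⟩ => ⟨k, hk.symm⟩, fun ⟨k, hk⟩ => ⟨k, hk.symm⟩⟩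
    rw [hset]; exact Set.countable_range _
  obtain ⟨t₀, ht₀⟩ := tau_unbounded hφc hφg hψc hψ0 hψg hτ hrel hcnt C
  by_contra hno
  push_neg at hno
  have hmono : Monotone fun t => τ t u := (hτ u).monotone
  have hNH : ∀ t, t₀ ≤ t → ¬(ψ (τ t u) (h u) = ψ sstar (h u)) := by
    intro t ht
    exact hno t (le_trans ht₀ (hmono ht))
  set γ : ℝ → ℝ := fun t => sstar + p * Int.fract ((τ t u - sstar) / p) with hγ
  have hkey : ∀ t, ψ (γ t) (h u) = ψ (τ t u) (h u) := by
    intro t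
    rw [hdiff]
    refine ⟨-⌊(τ t u - sstar) / p⌋, ?_⟩
    have hfr : Int.fract ((τ t u - sstar) / p)
        = (τ t u - sstar) / p - ⌊(τ t u - sstar) / p⌋ := (Int.self_sub_floor _).symm
    have hpx : p * ((τ t u - sstar) / p) = τ t u - sstar := by field_simp
    simp only [hγ]
    rw [hfr]
    push_cast
    linear_combination hpx
  have hfrpos : ∀ t, t₀ ≤ t → 0 < Int.fract ((τ t u - sstar) / p) := by
    intro t ht
    rcases lt_or_eq_of_le (Int.fract_nonneg ((τ t u - sstar) / p)) with hlt | heq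
    · exact hlt
    · exfalso
      apply hNH t ht
      rw [hdiff]
      refine ⟨⌊(τ t u - sstar) / p⌋, ?_⟩
      have h2 : (τ t u - sstar) / p - ⌊(τ t u - sstar) / p⌋ = 0 := by
        rw [Int.self_sub_floor]; exact heq.symm
      have h3 : (τ t u - sstar) / p = (⌊(τ t u - sstar) / p⌋ : ℝ) := by linarith
      rw [div_eq_iff (ne_of_gt hp)] at h3
      exact h3
  have hFR : ∀ a b : ℝ, (∃ k : ℤ, a - b = k * p) →
      Int.fract ((a - sstar) / p) = Int.fract ((b - sstar) / p) := by
    rintro a b ⟨k, hk⟩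
    have ha : a = b + (k : ℝ) * p := by linarith
    rw [ha, show b + (k : ℝ) * p - sstar = b - sstar + (k : ℝ) * p by ring, add_div,
      mul_div_cancel_right₀ _ (ne_of_gt hp), Int.fract_add_intCast]
  -- right window
  have hwinR : ∀ t₁, t₀ ≤ t₁ → ∃ δ, 0 < δ ∧ ∀ t, t₁ < t → t ≤ t₁ + δ → γ t₁ ≤ γ t := by
    intro t₁ ht₁
    obtain ⟨b, hb1, hb2, hb3, hb4⟩ := tau_rightlim hφc hψc hτ hrel u t₁
    have hbc : Int.fract ((b - sstar) / p) = Int.fract ((τ t₁ u - sstar) / p) :=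
      hFR _ _ ((hdiff b (τ t₁ u)).mp hb4)
    set f₁ := Int.fract ((τ t₁ u - sstar) / p) with hf₁
    have hf₁pos : 0 < f₁ := hfrpos t₁ ht₁
    have hf₁lt : f₁ < 1 := Int.fract_lt_one _
    have hε : 0 < p * (1 - f₁) / 2 := by nlinarith
    obtain ⟨t', ht'1, ht'2⟩ := hb3 _ hε
    refine ⟨t' - t₁, by linarith, ?_⟩
    intro t htl htr
    have h1 : b ≤ τ t u := hb2 t htl
    have h2 : τ t u ≤ τ t' u := hmono (by linarith)
    set m := ⌊(b - sstar) / p⌋ with hm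
    have hbm : (b - sstar) / p = (m : ℝ) + f₁ := by
      have h5 : (b - sstar) / p - (m : ℝ) = f₁ := by
        rw [hm, Int.self_sub_floor, hbc]
      linarith
    have hbval : b = sstar + p * ((m : ℝ) + f₁) := by
      rw [← hbm]; field_simp; ring
    have hx1 : (m : ℝ) + f₁ ≤ (τ t u - sstar) / p := by
      rw [← hbm]
      gcongr
    have hx2 : (τ t u - sstar) / p < (m : ℝ) + 1 := by
      rw [div_lt_iff₀ hp]
      nlinarith
    have hfloor : ⌊(τ t u - sstar) / p⌋ = m := by
      rw [Int.floor_eq_iff]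
      constructor
      · push_cast; linarith
      · push_cast; linarith
    have hfr2 : Int.fract ((τ t u - sstar) / p) = (τ t u - sstar) / p - (m : ℝ) := by
      rw [← hfloor, Int.self_sub_floor]
    simp only [hγ]
    rw [hfr2, ← hf₁]
    nlinarith
  -- left window
  have hwinL : ∀ t₁, t₀ ≤ t₁ → ∃ δ, 0 < δ ∧ ∀ t, t₁ - δ ≤ t → t < t₁ → γ t ≤ γ t₁ := by
    intro t₁ ht₁
    obtain ⟨a, ha1, ha2, ha3, ha4⟩ := tau_leftlim hφc hψc hτ hrel u t₁
    have hac : Int.fract ((a - sstar) / p) = Int.fract ((τ t₁ u - sstar) / p) :=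
      hFR _ _ ((hdiff a (τ t₁ u)).mp ha4)
    set f₁ := Int.fract ((τ t₁ u - sstar) / p) with hf₁
    have hf₁pos : 0 < f₁ := hfrpos t₁ ht₁
    have hf₁lt : f₁ < 1 := Int.fract_lt_one _
    have hε : 0 < p * f₁ / 2 := by nlinarith
    obtain ⟨t', ht'1, ht'2⟩ := ha3 _ hε
    refine ⟨t₁ - t', by linarith, ?_⟩
    intro t htl htr
    have h1 : τ t u ≤ a := ha2 t htr
    have h2 : τ t' u ≤ τ t u := hmono (by linarith)
    set m := ⌊(a - sstar) / p⌋ with hm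
    have ham : (a - sstar) / p = (m : ℝ) + f₁ := by
      have h5 : (a - sstar) / p - (m : ℝ) = f₁ := by
        rw [hm, Int.self_sub_floor, hac]
      linarith
    have haval : a = sstar + p * ((m : ℝ) + f₁) := by
      rw [← ham]; field_simp; ring
    have hx1 : (τ t u - sstar) / p ≤ (m : ℝ) + f₁ := by
      rw [← ham]
      gcongr
    have hx2 : (m : ℝ) < (τ t u - sstar) / p := by
      rw [lt_div_iff₀ hp]
      nlinarith
    have hfloor : ⌊(τ t u - sstar) / p⌋ = m := by
      rw [Int.floor_eq_iff]
      constructor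
      · push_cast; linarith
      · push_cast; linarith
    have hfr2 : Int.fract ((τ t u - sstar) / p) = (τ t u - sstar) / p - (m : ℝ) := by
      rw [← hfloor, Int.self_sub_floor]
    simp only [hγ]
    rw [hfr2, ← hf₁]
    nlinarith
  -- global monotonicity of γ on [t₀, ∞)
  have hMONO : ∀ t₁ t₂, t₀ ≤ t₁ → t₁ ≤ t₂ → γ t₁ ≤ γ t₂ := by
    intro t₁ t₂ h01 h12
    set A := {t : ℝ | t ∈ Set.Icc t₁ t₂ ∧ γ t₁ ≤ γ t} with hA
    have hmemA : t₁ ∈ A := ⟨⟨le_refl _, h12⟩, le_refl _⟩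
    have hne : A.Nonempty := ⟨t₁, hmemA⟩
    have hbddA : BddAbove A := ⟨t₂, fun a ha => ha.1.2⟩
    set s := sSup A with hs
    have hs1 : t₁ ≤ s := le_csSup hbddA hmemA
    have hs2 : s ≤ t₂ := csSup_le hne (fun a ha => ha.1.2)
    have hsA : γ t₁ ≤ γ s := by
      obtain ⟨δ, hδ, hwin⟩ := hwinL s (le_trans h01 hs1)
      obtain ⟨a, haA, ha⟩ := exists_lt_of_lt_csSup hne (by linarith : s - δ < s)
      have haup : a ≤ s := le_csSup hbddA haA
      rcases eq_or_lt_of_le haup with heq | hlt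
      · rw [← heq]; exact haA.2
      · exact le_trans haA.2 (hwin a (by linarith) hlt)
    rcases eq_or_lt_of_le hs2 with heq | hlt
    · rw [← heq]; exact hsA
    · exfalso
      obtain ⟨δ, hδ, hwin⟩ := hwinR s (le_trans h01 hs1)
      set t' := min (s + δ) t₂ with ht'
      have h1 : s < t' := lt_min (by linarith) hlt
      have h2 : t' ≤ s + δ := min_le_left _ _
      have htA : t' ∈ A := ⟨⟨by linarith, min_le_right _ _⟩, le_trans hsA (hwin t' h1 h2)⟩
      have := le_csSup hbddA htA
      linarith
  -- limit of γ
  set γM : ℝ → ℝ := fun t => γ (max t t₀) with hγM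
  have hγMmono : Monotone γM := by
    intro s t hst
    exact hMONO _ _ (le_max_right _ _) (max_le_max hst (le_refl t₀))
  have hγMbdd : BddAbove (Set.range γM) := by
    refine ⟨sstar + p, ?_⟩
    rintro q ⟨t, rfl⟩
    simp only [hγM, hγ]
    nlinarith [Int.fract_lt_one ((τ (max t t₀) u - sstar) / p),
      Int.fract_nonneg ((τ (max t t₀) u - sstar) / p)]
  set L := ⨆ t, γM t with hL
  have hlimγ : Tendsto γM atTop (𝓝 L) := tendsto_atTop_ciSup hγMmono hγMbdd
  set z := h.symm (ψ L (h u)) with hz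
  have horb : ∀ t, t₀ ≤ t → φ t u = h.symm (ψ (γM t) (h u)) := by
    intro t ht
    have hmax : max t t₀ = t := max_eq_left ht
    have he : ψ (γM t) (h u) = ψ (τ t u) (h u) := by
      simp only [hγM]
      rw [hmax]
      exact hkey t
    rw [he, ← hrel]
    exact (h.symm_apply_apply _).symm
  have hlim2 : Tendsto (fun t => φ t u) atTop (𝓝 z) := by
    have hc2 : Continuous fun q : ℝ => h.symm (ψ q (h u)) :=
      h.symm.continuous.comp (cont_psi1 hψc (h u))
    have hten := (hc2.tendsto L).comp hlimγ
    apply hten.congr'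
    filter_upwards [eventually_ge_atTop t₀] with t ht
    exact (horb t ht).symm
  have hrest : ∀ s', φ s' z = z := rest_of_tendsto φ hφc hφg hlim2
  have hcnt' : {q : ℝ | ψ q (h z) = h z}.Countable := by
    have hhz : h z = ψ L (h u) := h.apply_symm_apply _
    rw [hhz, G_conj hψ0 hψg]
    exact hcnt
  exact rest_countable_contra hτ hrel hrest hcnt'

include hφc hφg hψc hψ0 hψg hτ hrel in
theorem tau_hits_time {u : X} {p : ℝ} (hp : 0 < p)
    (hG : ∀ q, ψ q (h u) = h u ↔ ∃ k : ℤ, q = k * p)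
    (sstar C : ℝ) :
    ∃ t : ℝ, C ≤ t ∧ ψ (τ t u) (h u) = ψ sstar (h u) := by
  obtain ⟨t, ht1, ht2⟩ := tau_hits hφc hφg hψc hψ0 hψg hτ hrel hp hG sstar (τ C u + 1)
  refine ⟨t, ?_, ht2⟩
  by_contra hc
  push_neg at hc
  have := (hτ u).monotone hc.le
  linarith

include hφc hψc hψ0 hψg hτ hrel in
theorem tau_cont {u : X} (hG0 : ∀ q, ψ q (h u) = h u → q = 0) :
    Continuous fun t => τ t u := by
  rw [continuous_iff_continuousAt]
  intro t₁
  rw [Metric.continuousAt_iff]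
  intro ε hε
  obtain ⟨a, ha1, ha2, ha3, ha4⟩ := tau_leftlim hφc hψc hτ hrel u t₁
  obtain ⟨b, hb1, hb2, hb3, hb4⟩ := tau_rightlim hφc hψc hτ hrel u t₁
  have hae : a = τ t₁ u := by
    have := hG0 _ ((flow_shift_iff ψ hψ0 hψg a (τ t₁ u) (h u)).mp ha4)
    linarith
  have hbe : b = τ t₁ u := by
    have := hG0 _ ((flow_shift_iff ψ hψ0 hψg b (τ t₁ u) (h u)).mp hb4)
    linarith
  obtain ⟨t', ht'1, ht'2⟩ := ha3 ε hε
  obtain ⟨t'', ht''1, ht''2⟩ := hb3 ε hε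
  refine ⟨min (t₁ - t') (t'' - t₁), by simp [ht'1, ht''1], ?_⟩
  intro t ht
  rw [Real.dist_eq] at ht
  have habs := abs_lt.mp ht
  have hmono : Monotone fun t => τ t u := (hτ u).monotone
  have hl : τ t' u ≤ τ t u := by
    apply hmono
    have hmin : min (t₁ - t') (t'' - t₁) ≤ t₁ - t' := min_le_left _ _
    linarith
  have hr : τ t u ≤ τ t'' u := by
    apply hmono
    have h2 := lt_of_lt_of_le habs.2 (min_le_right (t₁ - t') (t'' - t₁))
    linarith
  rw [Real.dist_eq, abs_lt]
  constructor
  · rw [hae] at ht'2; linarith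
  · rw [hbe] at ht''2; linarith

include hφc hφ0 hφg hψc hψ0 hψg hτ hrel in
theorem tau_solve {u : X} (hG0 : ∀ q, ψ q (h u) = h u → q = 0) {s : ℝ} (hs : 0 ≤ s) :
    ∃ t, 0 ≤ t ∧ τ t u = s := by
  have h00 : τ 0 u = 0 := hG0 _ (tau_zero_mem hφ0 hrel)
  have hcnt : {q : ℝ | ψ q (h u) = h u}.Countable :=
    Set.Countable.mono (fun q hq => by simpa using hG0 q hq) (Set.countable_singleton 0)
  obtain ⟨T, hT⟩ := tau_unbounded hφc hφg hψc hψ0 hψg hτ hrel hcnt s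
  set T' := max T 0 with hT'
  have h0T' : (0 : ℝ) ≤ T' := le_max_right _ _
  have hT'2 : s ≤ τ T' u := le_trans hT ((hτ u).monotone (le_max_left _ _))
  have hmem : s ∈ Set.Icc (τ 0 u) (τ T' u) := by
    rw [h00]; exact ⟨hs, hT'2⟩
  obtain ⟨t, htm, hte⟩ := intermediate_value_Icc h0T'
    ((tau_cont hφc hψc hψ0 hψg hτ hrel hG0).continuousOn) hmem
  exact ⟨t, htm.1, hte⟩

end machine
section contradiction
variable {X Y : Type*} [TopologicalSpace X] [T2Space X] [TopologicalSpace Y] [T2Space Y]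
variable {φ : ℝ → X → X} {ψ : ℝ → Y → Y} {h : X ≃ₜ Y} {τ : ℝ → X → ℝ}
variable (hφc : Continuous fun p : ℝ × X => φ p.1 p.2)
  (hφ0 : ∀ x, φ 0 x = x) (hφg : ∀ t s x, φ t (φ s x) = φ (t + s) x)
  (hψc : Continuous fun p : ℝ × Y => ψ p.1 p.2)
  (hψ0 : ∀ y, ψ 0 y = y) (hψg : ∀ t s y, ψ t (ψ s y) = ψ (t + s) y)
  (hτ : ∀ x, StrictMono fun t => τ t x)
  (hrel : ∀ t x, h (φ t x) = ψ (τ t x) (h x))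

include hφc hφ0 hφg hψc hψ0 hψg hτ hrel in
/-- Contradiction: arbitrarily long `φ`-times with bounded `τ`-values,
while all period groups are trivial. -/
theorem no_bounded_connection {x : X} {T : ℕ → ℝ} {U : ℕ → X} {M : ℝ}
    (hT : Tendsto T atTop atTop) (hU : Tendsto U atTop (𝓝 x))
    (hG0U : ∀ k q, ψ q (h (U k)) = h (U k) → q = 0)
    (hG0x : ∀ q, ψ q (h x) = h x → q = 0)
    (hTpos : ∀ k, 0 ≤ T k)
    (hσM : ∀ k, τ (T k) (U k) ≤ M) : False := by
  classical
  have hτ0U : ∀ k, τ 0 (U k) = 0 := fun k => hG0U k _ (tau_zero_mem hφ0 hrel)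
  have hρmem : ∀ k, τ (T k / 2) (U k) ∈ Set.Icc (0:ℝ) M := by
    intro k
    constructor
    · rw [← hτ0U k]; exact (hτ (U k)).monotone (by linarith [hTpos k])
    · exact le_trans ((hτ (U k)).monotone (by linarith [hTpos k])) (hσM k)
  obtain ⟨ρs, hρsmem, e, hemono, hρlim⟩ :=
    (isCompact_Icc (a := (0:ℝ)) (b := M)).tendsto_subseq hρmem
  -- limit point b of the half-time orbit points
  set b := h.symm (ψ ρs (h x)) with hbdef
  have hUe : Tendsto (fun k => U (e k)) atTop (𝓝 x) := hU.comp hemono.tendsto_atTop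
  have hTe : Tendsto (fun k => T (e k)) atTop atTop := hT.comp hemono.tendsto_atTop
  have hb : Tendsto (fun k => φ (T (e k) / 2) (U (e k))) atTop (𝓝 b) := by
    have hpair : Tendsto (fun k => (τ (T (e k) / 2) (U (e k)), h (U (e k)))) atTop
        (𝓝 (ρs, h x)) :=
      hρlim.prodMk_nhds ((h.continuous.tendsto x).comp hUe)
    have h2 : Tendsto (fun k => ψ (τ (T (e k) / 2) (U (e k))) (h (U (e k)))) atTop
        (𝓝 (ψ ρs (h x))) := (hψc.tendsto (ρs, h x)).comp hpair
    have h3 := (h.symm.continuous.tendsto (ψ ρs (h x))).comp h2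
    apply h3.congr
    intro k
    simp only [Function.comp_apply]
    rw [← hrel, h.symm_apply_apply]
  have hhb : h b = ψ ρs (h x) := h.apply_symm_apply _
  have hbcnt : {q : ℝ | ψ q (h b) = h b}.Countable := by
    rw [hhb, G_conj hψ0 hψg]
    exact Set.Countable.mono (fun q hq => by simpa using hG0x q hq) (Set.countable_singleton 0)
  obtain ⟨t0, ht0⟩ := tau_unbounded hφc hφg hψc hψ0 hψg hτ hrel hbcnt (M + 1)
  set r := max t0 0 with hrdef
  have hr0 : (0:ℝ) ≤ r := le_max_right _ _
  have hrM : M + 1 ≤ τ r b := le_trans ht0 ((hτ b).monotone (le_max_left _ _))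
  -- θ bounds hold eventually
  have hθev : ∀ᶠ k in atTop, τ (T (e k) / 2 + r) (U (e k)) ∈ Set.Icc (0:ℝ) M := by
    filter_upwards [hTe.eventually_ge_atTop (2 * r)] with k hk
    constructor
    · rw [← hτ0U (e k)]
      exact (hτ (U (e k))).monotone (by linarith [hTpos (e k)])
    · exact le_trans ((hτ (U (e k))).monotone (by linarith)) (hσM (e k))
  obtain ⟨N, hN⟩ := eventually_atTop.mp hθev
  set f : ℕ → ℕ := fun k => e (k + N) with hfdef
  have hfmem : ∀ k, τ (T (f k) / 2 + r) (U (f k)) ∈ Set.Icc (0:ℝ) M := by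
    intro k; exact hN (k + N) (by omega)
  obtain ⟨θs, hθsmem, e2, he2mono, hθlim⟩ :=
    (isCompact_Icc (a := (0:ℝ)) (b := M)).tendsto_subseq hfmem
  set g : ℕ → ℕ := fun k => f (e2 k) with
    hgdef
  have hgten : Tendsto (fun k => e2 k + N) atTop atTop :=
    (tendsto_add_atTop_nat N).comp he2mono.tendsto_atTop
  have hUg : Tendsto (fun k => U (g k)) atTop (𝓝 x) := hUe.comp hgten
  have hbg : Tendsto (fun k => φ (T (g k) / 2) (U (g k))) atTop (𝓝 b) := hb.comp hgten
  -- first formula for the limit of  h (φ (T/2 + r) U)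
  have hlim1 : Tendsto (fun k => h (φ (T (g k) / 2 + r) (U (g k)))) atTop
      (𝓝 (h (φ r b))) := by
    have hc : Continuous fun w => h (φ r w) := h.continuous.comp (cont_phi2 hφc r)
    have := (hc.tendsto b).comp hbg
    apply this.congr
    intro k
    simp only [Function.comp_apply]
    rw [hφg, add_comm]
  -- second formula
  have hlim2 : Tendsto (fun k => h (φ (T (g k) / 2 + r) (U (g k)))) atTop
      (𝓝 (ψ θs (h x))) := by
    have hpair : Tendsto (fun k => (τ (T (g k) / 2 + r) (U (g k)), h (U (g k)))) atTop
        (𝓝 (θs, h x)) := hθlim.prodMk_nhds ((h.continuous.tendsto x).comp hUg)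
    have h2 : Tendsto (fun k => ψ (τ (T (g k) / 2 + r) (U (g k))) (h (U (g k)))) atTop
        (𝓝 (ψ θs (h x))) := (hψc.tendsto (θs, h x)).comp hpair
    apply h2.congr
    intro k
    rw [← hrel]
  have hEq : h (φ r b) = ψ θs (h x) := tendsto_nhds_unique hlim1 hlim2
  have hEq2 : h (φ r b) = ψ (τ r b + ρs) (h x) := by
    rw [hrel r b, hhb, hψg]
  have hfin : τ r b + ρs - θs = 0 := by
    apply hG0x
    rw [← flow_shift_iff ψ hψ0 hψg, ← hEq2, hEq]
  have hθM : θs ≤ M := hθsmem.2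
  have hρ0 : 0 ≤ ρs := hρsmem.1
  linarith

include hφc hφ0 hφg hψc hψ0 hψg hτ hrel in
/-- Contradiction: arbitrarily large `τ`-values with bounded `φ`-times,
while all period groups are trivial. -/
theorem no_bounded_connection2 {x : X} {S : ℕ → ℝ} {U : ℕ → X} {tt : ℕ → ℝ} {M : ℝ}
    (hS : Tendsto S atTop atTop) (hU : Tendsto U atTop (𝓝 x))
    (hG0U : ∀ k q, ψ q (h (U k)) = h (U k) → q = 0)
    (hG0x : ∀ q, ψ q (h x) = h x → q = 0)
    (htt : ∀ k, 0 ≤ tt k ∧ tt k ≤ M ∧ τ (tt k) (U k) = S k) : False := by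
  classical
  have hτ0U : ∀ k, τ 0 (U k) = 0 := fun k => hG0U k _ (tau_zero_mem hφ0 hrel)
  have hM0 : (0:ℝ) ≤ M := le_trans (htt 0).1 (htt 0).2.1
  have hτ0x : τ 0 x = 0 := hG0x _ (tau_zero_mem hφ0 hrel)
  set r := τ M x + 1 with hrdef
  have hr0 : (0:ℝ) ≤ r := by
    have : τ 0 x ≤ τ M x := (hτ x).monotone hM0
    rw [hτ0x] at this
    linarith
  obtain ⟨N, hN⟩ := eventually_atTop.mp (hS.eventually_ge_atTop r)
  have hsolve : ∀ k, ∃ ρ, ρ ∈ Set.Icc 0 (tt (k + N)) ∧ τ ρ (U (k + N)) = r := by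
    intro k
    have hcont : Continuous fun t => τ t (U (k + N)) :=
      tau_cont hφc hψc hψ0 hψg hτ hrel (hG0U (k + N))
    have hmem : r ∈ Set.Icc (τ 0 (U (k + N))) (τ (tt (k + N)) (U (k + N))) := by
      rw [hτ0U, (htt (k + N)).2.2]
      exact ⟨hr0, hN (k + N) (by omega)⟩
    obtain ⟨ρ, hρm, hρe⟩ := intermediate_value_Icc (htt (k + N)).1 hcont.continuousOn hmem
    exact ⟨ρ, hρm, hρe⟩
  choose ρ hρmem hρeq using hsolve
  have hρmem' : ∀ k, ρ k ∈ Set.Icc (0:ℝ) M :=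
    fun k => ⟨(hρmem k).1, le_trans (hρmem k).2 (htt (k + N)).2.1⟩
  obtain ⟨ρs, hρsmem, e2, he2mono, hρlim⟩ :=
    (isCompact_Icc (a := (0:ℝ)) (b := M)).tendsto_subseq hρmem'
  have hgten : Tendsto (fun k => e2 k + N) atTop atTop :=
    (tendsto_add_atTop_nat N).comp he2mono.tendsto_atTop
  have hUg : Tendsto (fun k => U (e2 k + N)) atTop (𝓝 x) := hU.comp hgten
  -- ψ r (h (U (g k))) = h (φ (ρ (e2 k)) (U (g k)))
  have hlim1 : Tendsto (fun k => ψ r (h (U (e2 k + N)))) atTop (𝓝 (ψ r (h x))) := by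
    have : Tendsto (fun k => h (U (e2 k + N))) atTop (𝓝 (h x)) :=
      (h.continuous.tendsto x).comp hUg
    have hc : Continuous fun y : Y => ψ r y :=
      hψc.comp (Continuous.prodMk continuous_const continuous_id)
    exact ((hc.tendsto (h x)).comp this).congr (fun k => rfl)
  have hlim2 : Tendsto (fun k => ψ r (h (U (e2 k + N)))) atTop (𝓝 (h (φ ρs x))) := by
    have hpair : Tendsto (fun k => (ρ (e2 k), U (e2 k + N))) atTop (𝓝 (ρs, x)) :=
      hρlim.prodMk_nhds hUg
    have h2 : Tendsto (fun k => φ (ρ (e2 k)) (U (e2 k + N))) atTop (𝓝 (φ ρs x)) :=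
      (hφc.tendsto (ρs, x)).comp hpair
    have h3 := (h.continuous.tendsto (φ ρs x)).comp h2
    apply h3.congr
    intro k
    simp only [Function.comp_apply]
    rw [hrel, hρeq (e2 k)]
  have hEq : ψ r (h x) = h (φ ρs x) := tendsto_nhds_unique hlim1 hlim2
  have hfin : r - τ ρs x = 0 := by
    apply hG0x
    rw [← flow_shift_iff ψ hψ0 hψg, ← hrel]
    exact hEq
  have : τ ρs x ≤ τ M x := (hτ x).monotone hρsmem.2
  linarith

end contradiction
section mainlemmas
variable {X Y : Type*} [TopologicalSpace X] [T2Space X] [TopologicalSpace Y] [T2Space Y]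
variable {φ : ℝ → X → X} {ψ : ℝ → Y → Y} {h : X ≃ₜ Y} {τ : ℝ → X → ℝ}
variable (hφc : Continuous fun p : ℝ × X => φ p.1 p.2)
  (hφ0 : ∀ x, φ 0 x = x) (hφg : ∀ t s x, φ t (φ s x) = φ (t + s) x)
  (hψc : Continuous fun p : ℝ × Y => ψ p.1 p.2)
  (hψ0 : ∀ y, ψ 0 y = y) (hψg : ∀ t s y, ψ t (ψ s y) = ψ (t + s) y)
  (hτ : ∀ x, StrictMono fun t => τ t x)
  (hrel : ∀ t x, h (φ t x) = ψ (τ t x) (h x))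

include hφc hφ0 hφg hψc hψ0 hψg hτ hrel in
theorem core_forward {x xp : X} {tp : ℕ → ℝ} {up : ℕ → X}
    (h1 : Tendsto tp atTop atTop) (h2 : Tendsto up atTop (𝓝 x))
    (h3 : Tendsto (fun n => φ (tp n) (up n)) atTop (𝓝 xp)) :
    ∃ (sp : ℕ → ℝ) (vp : ℕ → Y), Tendsto sp atTop atTop ∧
      Tendsto vp atTop (𝓝 (h x)) ∧
      Tendsto (fun n => ψ (sp n) (vp n)) atTop (𝓝 (h xp)) := by
  classical
  have hchoice : ∀ n : ℕ, ∃ s : ℝ,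
      ψ s (h (up n)) = h (φ (tp n) (up n)) ∧
      ((n : ℝ) ≤ s ∨ ((∀ q, ψ q (h (up n)) = h (up n) → q = 0)
        ∧ s = τ (tp n) (up n))) := by
    intro n
    rcases period_trichotomy ψ hψc hψ0 hψg (h (up n)) with hall | ⟨p, hp, hG⟩ | h0
    · exact ⟨n, by rw [hall, hrel, hall], Or.inl le_rfl⟩
    · obtain ⟨t, ht1, ht2⟩ :=
        tau_hits hφc hφg hψc hψ0 hψg hτ hrel hp hG (τ (tp n) (up n)) n
      exact ⟨τ t (up n), by rw [ht2, ← hrel], Or.inl ht1⟩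
    · exact ⟨τ (tp n) (up n), by rw [← hrel], Or.inr ⟨h0, rfl⟩⟩
  choose s hs1 hs2 using hchoice
  have hvp : Tendsto (fun n => h (up n)) atTop (𝓝 (h x)) := (h.continuous.tendsto x).comp h2
  have hψs : Tendsto (fun n => ψ (s n) (h (up n))) atTop (𝓝 (h xp)) :=
    ((h.continuous.tendsto xp).comp h3).congr (fun n => (hs1 n).symm)
  by_cases hT : Tendsto s atTop atTop
  · exact ⟨s, fun n => h (up n), hT, hvp, hψs⟩
  rw [tendsto_atTop] at hT
  push_neg at hT
  obtain ⟨M, hM⟩ := hT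
  have hM : ∃ᶠ n in atTop, ¬ M ≤ s n := hM.mono (fun n hn => not_le.mpr hn)
  obtain ⟨e, hemono, he⟩ := Filter.extraction_of_frequently_atTop hM
  have hev : ∀ᶠ k in atTop, ((∀ q, ψ q (h (up (e k))) = h (up (e k)) → q = 0)
      ∧ s (e k) = τ (tp (e k)) (up (e k))) ∧ 0 ≤ tp (e k) := by
    have hek : Tendsto (fun k => tp (e k)) atTop atTop := h1.comp hemono.tendsto_atTop
    filter_upwards [hek.eventually_ge_atTop 0, eventually_gt_atTop ⌈M⌉₊] with k hk1 hk2
    refine ⟨?_, hk1⟩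
    rcases hs2 (e k) with hle | hpair
    · exfalso
      apply he k
      calc M ≤ (⌈M⌉₊ : ℝ) := Nat.le_ceil M
      _ ≤ (k : ℝ) := by exact_mod_cast hk2.le
      _ ≤ ((e k) : ℝ) := by exact_mod_cast hemono.le_apply
      _ ≤ s (e k) := hle
    · exact hpair
  obtain ⟨N, hN⟩ := eventually_atTop.mp hev
  set f : ℕ → ℕ := fun k => e (k + N) with hfdef
  have hfT : Tendsto f atTop atTop := hemono.tendsto_atTop.comp (tendsto_add_atTop_nat N)
  have hfprop : ∀ k, ((∀ q, ψ q (h (up (f k))) = h (up (f k)) → q = 0)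
      ∧ s (f k) = τ (tp (f k)) (up (f k))) ∧ 0 ≤ tp (f k) := fun k => hN (k + N) (by omega)
  have hσmem : ∀ k, s (f k) ∈ Set.Icc (0:ℝ) M := by
    intro k
    refine ⟨?_, ?_⟩
    · rw [(hfprop k).1.2]
      have h0' : τ 0 (up (f k)) = 0 := (hfprop k).1.1 _ (tau_zero_mem hφ0 hrel)
      rw [← h0']
      exact (hτ (up (f k))).monotone (hfprop k).2
    · exact (not_le.mp (he (k + N))).le
  obtain ⟨sbar, hsmem, e2, he2mono, hslim⟩ :=
    (isCompact_Icc (a := (0:ℝ)) (b := M)).tendsto_subseq hσmem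
  set g : ℕ → ℕ := fun k => f (e2 k) with hgdef
  have hgten : Tendsto g atTop atTop := hfT.comp he2mono.tendsto_atTop
  have hUg : Tendsto (fun k => up (g k)) atTop (𝓝 x) := h2.comp hgten
  have hTg : Tendsto (fun k => tp (g k)) atTop atTop := h1.comp hgten
  have hxpeq : h xp = ψ sbar (h x) := by
    have hl1 : Tendsto (fun k => ψ (s (g k)) (h (up (g k)))) atTop (𝓝 (h xp)) :=
      hψs.comp hgten
    have hpair : Tendsto (fun k => (s (g k), h (up (g k)))) atTop (𝓝 (sbar, h x)) :=
      hslim.prodMk_nhds ((h.continuous.tendsto x).comp hUg)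
    have hl2 := (hψc.tendsto (sbar, h x)).comp hpair
    exact tendsto_nhds_unique hl1 hl2
  rcases period_trichotomy ψ hψc hψ0 hψg (h x) with hall | ⟨p, hp, hG⟩ | h0x
  · refine ⟨fun n => (n:ℝ), fun _ => h x, tendsto_natCast_atTop_atTop,
      tendsto_const_nhds, ?_⟩
    have hc : ∀ n : ℕ, ψ ((n:ℝ)) (h x) = h xp := by
      intro n; rw [hall, hxpeq, hall]
    exact tendsto_const_nhds.congr (fun n => (hc n).symm)
  · refine ⟨fun n => sbar + (n:ℝ) * p, fun _ => h x, ?_, tendsto_const_nhds, ?_⟩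
    · exact tendsto_atTop_add_const_left _ sbar
        ((tendsto_natCast_atTop_atTop (R := ℝ)).atTop_mul_const hp)
    · have hc : ∀ n : ℕ, ψ (sbar + (n:ℝ) * p) (h x) = h xp := by
        intro n
        have hper : ψ ((n:ℝ) * p) (h x) = h x := (hG _).mpr ⟨(n:ℤ), by push_cast; ring⟩
        calc ψ (sbar + (n:ℝ) * p) (h x) = ψ sbar (ψ ((n:ℝ) * p) (h x)) :=
              (hψg sbar ((n:ℝ) * p) (h x)).symm
        _ = ψ sbar (h x) := by rw [hper]
        _ = h xp := hxpeq.symm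
      exact tendsto_const_nhds.congr (fun n => (hc n).symm)
  · exfalso
    refine no_bounded_connection hφc hφ0 hφg hψc hψ0 hψg hτ hrel
      (T := fun k => tp (g k)) (U := fun k => up (g k)) (M := M) hTg hUg
      (fun k => (hfprop (e2 k)).1.1) h0x (fun k => (hfprop (e2 k)).2) ?_
    intro k
    rw [← (hfprop (e2 k)).1.2]
    exact (hσmem (e2 k)).2

include hφc hφ0 hφg hψc hψ0 hψg hτ hrel in
theorem core_backward {x xp : X} {sp : ℕ → ℝ} {vp : ℕ → Y}
    (h1 : Tendsto sp atTop atTop) (h2 : Tendsto vp atTop (𝓝 (h x)))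
    (h3 : Tendsto (fun n => ψ (sp n) (vp n)) atTop (𝓝 (h xp))) :
    ∃ (tp : ℕ → ℝ) (up : ℕ → X), Tendsto tp atTop atTop ∧ Tendsto up atTop (𝓝 x) ∧
      Tendsto (fun n => φ (tp n) (up n)) atTop (𝓝 xp) := by
  classical
  set U : ℕ → X := fun n => h.symm (vp n) with hUdef
  have hvpU : ∀ n, h (U n) = vp n := fun n => h.apply_symm_apply _
  have hU : Tendsto U atTop (𝓝 x) := by
    have := (h.symm.continuous.tendsto (h x)).comp h2
    rw [h.symm_apply_apply] at this; exact this
  have hchoice : ∀ n : ℕ, ∃ t : ℝ,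
      (0 ≤ sp n → φ t (U n) = h.symm (ψ (sp n) (vp n))) ∧
      ((n : ℝ) ≤ t ∨ ((∀ q, ψ q (h (U n)) = h (U n) → q = 0)
        ∧ 0 ≤ t ∧ (0 ≤ sp n → τ t (U n) = sp n))) := by
    intro n
    rcases period_trichotomy ψ hψc hψ0 hψg (h (U n)) with hall | ⟨p, hp, hG⟩ | h0
    · refine ⟨(n:ℝ), ?_, Or.inl le_rfl⟩
      intro _
      apply h.injective
      rw [h.apply_symm_apply, hrel, ← hvpU n, hall, hall]
    · obtain ⟨t, ht1, ht2⟩ := tau_hits_time hφc hφg hψc hψ0 hψg hτ hrel hp hG (sp n) n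
      refine ⟨t, ?_, Or.inl ht1⟩
      intro _
      apply h.injective
      rw [h.apply_symm_apply, hrel, ← hvpU n]
      exact ht2
    · by_cases hsn : 0 ≤ sp n
      · obtain ⟨t, ht0, hteq⟩ := tau_solve hφc hφ0 hφg hψc hψ0 hψg hτ hrel h0 hsn
        refine ⟨t, ?_, Or.inr ⟨h0, ht0, fun _ => hteq⟩⟩
        intro _
        apply h.injective
        rw [h.apply_symm_apply, hrel, ← hvpU n, hteq]
      · exact ⟨0, fun hs => absurd hs hsn, Or.inr ⟨h0, le_rfl, fun hs => absurd hs hsn⟩⟩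
  choose t ht1 ht2 using hchoice
  have hφseq : Tendsto (fun n => φ (t n) (U n)) atTop (𝓝 xp) := by
    have hsymm := (h.symm.continuous.tendsto (h xp)).comp h3
    rw [h.symm_apply_apply] at hsymm
    apply hsymm.congr'
    filter_upwards [h1.eventually_ge_atTop 0] with n hn
    exact ((ht1 n) hn).symm
  by_cases hT : Tendsto t atTop atTop
  · exact ⟨t, U, hT, hU, hφseq⟩
  rw [tendsto_atTop] at hT
  push_neg at hT
  obtain ⟨M, hM⟩ := hT
  have hM : ∃ᶠ n in atTop, ¬ M ≤ t n := hM.mono (fun n hn => not_le.mpr hn)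
  obtain ⟨e, hemono, he⟩ := Filter.extraction_of_frequently_atTop hM
  have hev : ∀ᶠ k in atTop, ((∀ q, ψ q (h (U (e k))) = h (U (e k)) → q = 0)
      ∧ 0 ≤ t (e k) ∧ (0 ≤ sp (e k) → τ (t (e k)) (U (e k)) = sp (e k)))
      ∧ 0 ≤ sp (e k) := by
    have hsk : Tendsto (fun k => sp (e k)) atTop atTop := h1.comp hemono.tendsto_atTop
    filter_upwards [hsk.eventually_ge_atTop 0, eventually_gt_atTop ⌈M⌉₊] with k hk1 hk2
    refine ⟨?_, hk1⟩
    rcases ht2 (e k) with hle | hgood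
    · exfalso
      apply he k
      calc M ≤ (⌈M⌉₊ : ℝ) := Nat.le_ceil M
      _ ≤ (k : ℝ) := by exact_mod_cast hk2.le
      _ ≤ ((e k) : ℝ) := by exact_mod_cast hemono.le_apply
      _ ≤ t (e k) := hle
    · exact hgood
  obtain ⟨N, hN⟩ := eventually_atTop.mp hev
  set f : ℕ → ℕ := fun k => e (k + N) with hfdef
  have hfT : Tendsto f atTop atTop := hemono.tendsto_atTop.comp (tendsto_add_atTop_nat N)
  have hfprop : ∀ k, ((∀ q, ψ q (h (U (f k))) = h (U (f k)) → q = 0)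
      ∧ 0 ≤ t (f k) ∧ (0 ≤ sp (f k) → τ (t (f k)) (U (f k)) = sp (f k)))
      ∧ 0 ≤ sp (f k) := fun k => hN (k + N) (by omega)
  have htmem : ∀ k, t (f k) ∈ Set.Icc (0:ℝ) M := by
    intro k
    exact ⟨(hfprop k).1.2.1, (not_le.mp (he (k + N))).le⟩
  obtain ⟨tbar, htmemb, e2, he2mono, htlim⟩ :=
    (isCompact_Icc (a := (0:ℝ)) (b := M)).tendsto_subseq htmem
  set g : ℕ → ℕ := fun k => f (e2 k) with hgdef
  have hgten : Tendsto g atTop atTop := hfT.comp he2mono.tendsto_atTop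
  have hUg : Tendsto (fun k => U (g k)) atTop (𝓝 x) := hU.comp hgten
  have hxpeq : xp = φ tbar x := by
    have hl1 : Tendsto (fun k => φ (t (g k)) (U (g k))) atTop (𝓝 xp) := hφseq.comp hgten
    have hpair : Tendsto (fun k => (t (g k), U (g k))) atTop (𝓝 (tbar, x)) :=
      htlim.prodMk_nhds hUg
    have hl2 := (hφc.tendsto (tbar, x)).comp hpair
    exact tendsto_nhds_unique hl1 hl2
  rcases period_trichotomy ψ hψc hψ0 hψg (h x) with hall | ⟨p, hp, hG⟩ | h0x
  · have hxrest : ∀ s', φ s' x = x := by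
      intro s'
      apply h.injective
      rw [hrel, hall]
    refine ⟨fun n => (n:ℝ), fun _ => x, tendsto_natCast_atTop_atTop,
      tendsto_const_nhds, ?_⟩
    have hc : ∀ n : ℕ, φ ((n:ℝ)) x = xp := by
      intro n; rw [hxrest, hxpeq, hxrest]
    exact tendsto_const_nhds.congr (fun n => (hc n).symm)
  · obtain ⟨T₀, hT₀1, hT₀2⟩ := tau_hits_time hφc hφg hψc hψ0 hψg hτ hrel hp hG 0 1
    have hxper : φ T₀ x = x := by
      apply h.injective
      rw [hrel, hT₀2, hψ0]
    refine ⟨fun n => tbar + (n:ℝ) * T₀, fun _ => x, ?_, tendsto_const_nhds, ?_⟩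
    · exact tendsto_atTop_add_const_left _ tbar
        ((tendsto_natCast_atTop_atTop (R := ℝ)).atTop_mul_const
          (by linarith : (0:ℝ) < T₀))
    · have hc : ∀ n : ℕ, φ (tbar + (n:ℝ) * T₀) x = xp := by
        intro n
        rw [← hφg, flow_iterate φ hφ0 hφg hxper n, hxpeq]
      exact tendsto_const_nhds.congr (fun n => (hc n).symm)
  · exfalso
    refine no_bounded_connection2 hφc hφ0 hφg hψc hψ0 hψg hτ hrel
      (S := fun k => sp (g k)) (U := fun k => U (g k)) (tt := fun k => t (g k)) (M := M)
      (h1.comp hgten) hUg (fun k => (hfprop (e2 k)).1.1) h0x ?_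
    intro k
    exact ⟨(hfprop (e2 k)).1.2.1, (htmem (e2 k)).2,
      (hfprop (e2 k)).1.2.2 (hfprop (e2 k)).2⟩

end mainlemmas

/-- If the flow `φ` on `X` is `(h,τ)`-related to the flow `ψ` on `Y`,
then for all `x⁻, x⁺ ∈ X`, `h` maps the `(x⁻,x⁺)`-core of `φ` onto the
`(h x⁻, h x⁺)`-core of `ψ`. -/
theorem stmt8 {X Y : Type*}
    [NormedAddCommGroup X] [NormedSpace ℝ X] [FiniteDimensional ℝ X]
    [NormedAddCommGroup Y] [NormedSpace ℝ Y] [FiniteDimensional ℝ Y]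
    (φ : ℝ → X → X) (ψ : ℝ → Y → Y)
    (hφcont : Continuous fun p : ℝ × X => φ p.1 p.2)
    (hφ0 : ∀ x, φ 0 x = x) (hφgrp : ∀ t s x, φ t (φ s x) = φ (t + s) x)
    (hψcont : Continuous fun p : ℝ × Y => ψ p.1 p.2)
    (hψ0 : ∀ y, ψ 0 y = y) (hψgrp : ∀ t s y, ψ t (ψ s y) = ψ (t + s) y)
    (h : X ≃ₜ Y) (τ : ℝ → X → ℝ)
    (hτ : ∀ x, StrictMono fun t => τ t x)
    (hrel : ∀ t x, h (φ t x) = ψ (τ t x) (h x))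
    (xm xp : X) :
    h '' {x : X | ∃ (tp tm : ℕ → ℝ) (up um : ℕ → X),
        Tendsto tp atTop atTop ∧ Tendsto tm atTop atBot ∧
        Tendsto up atTop (𝓝 x) ∧ Tendsto um atTop (𝓝 x) ∧
        Tendsto (fun n => φ (tp n) (up n)) atTop (𝓝 xp) ∧
        Tendsto (fun n => φ (tm n) (um n)) atTop (𝓝 xm)}
      = {y : Y | ∃ (tp tm : ℕ → ℝ) (vp vm : ℕ → Y),
        Tendsto tp atTop atTop ∧ Tendsto tm atTop atBot ∧
        Tendsto vp atTop (𝓝 y) ∧ Tendsto vm atTop (𝓝 y) ∧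
        Tendsto (fun n => ψ (tp n) (vp n)) atTop (𝓝 (h xp)) ∧
        Tendsto (fun n => ψ (tm n) (vm n)) atTop (𝓝 (h xm))} := by
  classical
  -- reversed flows
  set φ' : ℝ → X → X := fun t x => φ (-t) x with hφ'def
  set ψ' : ℝ → Y → Y := fun t y => ψ (-t) y with hψ'def
  set τ' : ℝ → X → ℝ := fun t x => -(τ (-t) x) with hτ'def
  have hφ'c : Continuous fun p : ℝ × X => φ' p.1 p.2 :=
    hφcont.comp ((continuous_fst.neg).prodMk continuous_snd)
  have hψ'c : Continuous fun p : ℝ × Y => ψ' p.1 p.2 :=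
    hψcont.comp ((continuous_fst.neg).prodMk continuous_snd)
  have hφ'0 : ∀ x, φ' 0 x = x := by intro x; simp only [hφ'def, neg_zero]; exact hφ0 x
  have hψ'0 : ∀ y, ψ' 0 y = y := by intro y; simp only [hψ'def, neg_zero]; exact hψ0 y
  have hφ'g : ∀ t s x, φ' t (φ' s x) = φ' (t + s) x := by
    intro t s x
    simp only [hφ'def]
    rw [hφgrp, neg_add]
  have hψ'g : ∀ t s y, ψ' t (ψ' s y) = ψ' (t + s) y := by
    intro t s y
    simp only [hψ'def]
    rw [hψgrp, neg_add]
  have hτ' : ∀ x, StrictMono fun t => τ' t x := by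
    intro x a b hab
    simp only [hτ'def]
    exact neg_lt_neg (hτ x (neg_lt_neg hab))
  have hrel' : ∀ t x, h (φ' t x) = ψ' (τ' t x) (h x) := by
    intro t x
    simp only [hφ'def, hψ'def, hτ'def, neg_neg]
    exact hrel (-t) x
  ext y
  constructor
  · rintro ⟨x, ⟨tp, tm, up, um, htp, htm, hup, hum, hfp, hfm⟩, rfl⟩
    obtain ⟨sp, vp, hsp, hvp, hψp⟩ :=
      core_forward hφcont hφ0 hφgrp hψcont hψ0 hψgrp hτ hrel htp hup hfp
    have htm' : Tendsto (fun n => -(tm n)) atTop atTop :=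
      tendsto_neg_atBot_atTop.comp htm
    have hfm' : Tendsto (fun n => φ' (-(tm n)) (um n)) atTop (𝓝 xm) :=
      hfm.congr (fun n => by simp only [hφ'def, neg_neg])
    obtain ⟨sm', vm, hsm', hvm, hψm⟩ :=
      core_forward hφ'c hφ'0 hφ'g hψ'c hψ'0 hψ'g hτ' hrel' htm' hum hfm'
    refine ⟨sp, fun n => -(sm' n), vp, vm, hsp,
      tendsto_neg_atTop_atBot.comp hsm', hvp, hvm, hψp, ?_⟩
    exact hψm.congr (fun n => by simp only [hψ'def])
  · rintro ⟨tp, tm, vp, vm, htp, htm, hvp, hvm, hψp, hψm⟩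
    refine ⟨h.symm y, ?_, h.apply_symm_apply y⟩
    have hvp' : Tendsto vp atTop (𝓝 (h (h.symm y))) := by
      rw [h.apply_symm_apply]; exact hvp
    have hvm' : Tendsto vm atTop (𝓝 (h (h.symm y))) := by
      rw [h.apply_symm_apply]; exact hvm
    obtain ⟨tp', up, htp', hup, hfp⟩ :=
      core_backward hφcont hφ0 hφgrp hψcont hψ0 hψgrp hτ hrel htp hvp' hψp
    have htm' : Tendsto (fun n => -(tm n)) atTop atTop :=
      tendsto_neg_atBot_atTop.comp htm
    have hψm' : Tendsto (fun n => ψ' (-(tm n)) (vm n)) atTop (𝓝 (h xm)) :=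
      hψm.congr (fun n => by simp only [hψ'def, neg_neg])
    obtain ⟨tm'', um, htm'', hum, hfm⟩ :=
      core_backward hφ'c hφ'0 hφ'g hψ'c hψ'0 hψ'g hτ' hrel' htm' hvm' hψm'
    refine ⟨tp', fun n => -(tm'' n), up, um, htp',
      tendsto_neg_atTop_atBot.comp htm'', hup, hum, hfp, ?_⟩
    exact hfm.congr (fun n => by simp only [hφ'def])
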